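/- The function F : (0,1) → ℝ defined by F(a) := 14 + 4a² + 6·arcsin(√(1−a²))/(a·√(1−a²)) − 3·(a + arcsin(√(1−a²))/√(1−a²))³/a satisfies F(a) < 0 for all a ∈ (0,1). -/

import Mathlib

open Real Set

lemma aux_mono {f f' : ℝ → ℝ} (hd : ∀ y, HasDerivAt f (f' y) y)
    (hf' : ∀ y, 0 ≤ y → 0 ≤ f' y) (h0 : f 0 = 0) {x : ℝ} (hx : 0 ≤ x) : 0 ≤ f x := by
  have hmono : MonotoneOn f (Ici (0:ℝ)) := by
    apply monotoneOn_of_deriv_nonneg (convex_Ici 0)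
    · exact (Continuous.continuousOn (by
        have : Differentiable ℝ f := fun y => (hd y).differentiableAt
        exact this.continuous))
    · intro y hy
      exact ((hd y).differentiableAt).differentiableWithinAt
    · intro y hy
      rw [(hd y).deriv]
      exact hf' y (le_of_lt (by simpa using hy))
  have := hmono (self_mem_Ici) (mem_Ici.2 hx) hx
  linarith [h0 ▸ this]

lemma sin_ge_poly (x : ℝ) (hx : 0 ≤ x) : x - x ^ 3 / 6 ≤ sin x := by
  have h := aux_mono (f := fun z => sin z - (z - z ^ 3 / 6))
    (f' := fun z => cos z - (1 - 3 * z ^ 2 / 6))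
    (fun y => by
      exact ((Real.hasDerivAt_sin y).sub
        ((hasDerivAt_id y).sub ((hasDerivAt_pow 3 y).div_const 6))).congr_deriv (by norm_num))
    (fun y hy => by nlinarith [Real.one_sub_sq_div_two_le_cos (x := y)])
    (by simp) hx
  simpa using h

lemma cos_le_poly (x : ℝ) (hx : 0 ≤ x) : cos x ≤ 1 - x ^ 2 / 2 + x ^ 4 / 24 := by
  have h := aux_mono (f := fun z => 1 - z ^ 2 / 2 + z ^ 4 / 24 - cos z)
    (f' := fun z => 0 - 2 * z ^ 1 / 2 + 4 * z ^ 3 / 24 - (-sin z))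
    (fun y => by
      exact (((hasDerivAt_const y (1:ℝ)).sub ((hasDerivAt_pow 2 y).div_const 2)).add
        ((hasDerivAt_pow 4 y).div_const 24)).sub (Real.hasDerivAt_cos y))
    (fun y hy => by
      have := sin_ge_poly y hy
      simp only [pow_one]
      nlinarith)
    (by simp) hx
  linarith [h]

lemma sin_le_poly (x : ℝ) (hx : 0 ≤ x) : sin x ≤ x - x ^ 3 / 6 + x ^ 5 / 120 := by
  have h := aux_mono (f := fun z => z - z ^ 3 / 6 + z ^ 5 / 120 - sin z)
    (f' := fun z => 1 - 3 * z ^ 2 / 6 + 5 * z ^ 4 / 120 - cos z)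
    (fun y => by
      exact ((((hasDerivAt_id y).sub ((hasDerivAt_pow 3 y).div_const 6)).add
        ((hasDerivAt_pow 5 y).div_const 120)).sub (Real.hasDerivAt_sin y)).congr_deriv (by norm_num))
    (fun y hy => by nlinarith [cos_le_poly y hy])
    (by simp) hx
  linarith [h]

lemma cos_ge_poly (x : ℝ) (hx : 0 ≤ x) :
    1 - x ^ 2 / 2 + x ^ 4 / 24 - x ^ 6 / 720 ≤ cos x := by
  have h := aux_mono (f := fun z => cos z - (1 - z ^ 2 / 2 + z ^ 4 / 24 - z ^ 6 / 720))
    (f' := fun z => -sin z - (0 - 2 * z ^ 1 / 2 + 4 * z ^ 3 / 24 - 6 * z ^ 5 / 720))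
    (fun y => by
      exact (Real.hasDerivAt_cos y).sub
        ((((hasDerivAt_const y (1:ℝ)).sub ((hasDerivAt_pow 2 y).div_const 2)).add
          ((hasDerivAt_pow 4 y).div_const 24)).sub ((hasDerivAt_pow 6 y).div_const 720)))
    (fun y hy => by
      have := sin_le_poly y hy
      simp only [pow_one]
      nlinarith)
    (by simp) hx
  linarith [h]

-- the single-variable polynomial fact
lemma poly_fact (x : ℝ) (hx0 : 0 ≤ x) (hxb : x ≤ 2.4675) :
    (-71/360 : ℝ) + (2893/21600)*x + (-227/5184)*x^2 + (6907/777600)*x^3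
      + (-6427/5184000)*x^4 + (3911/31104000)*x^5 + (-8899/933120000)*x^6
      + (1361/2488320000)*x^7 + (-47/1990656000)*x^8 + (12089/16124313600000)*x^9
      + (-179/10749542400000)*x^10 + (1/4299816960000)*x^11
      + (-1/644972544000000)*x^12 < -(1/40) := by
  have hx4 : (0:ℝ) ≤ x^4 := by positivity
  have h1 : x * x^4 ≤ 2.4675 * x^4 := by nlinarith
  have h3 : x^3 ≤ 2.4675^3 := by nlinarith
  have h5 : x^5 ≤ 2.4675^5 := by nlinarith [pow_le_pow_left₀ hx0 hxb 5]
  have h7 : x^7 ≤ 2.4675^7 := by nlinarith [pow_le_pow_left₀ hx0 hxb 7]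
  have h3' : x^3 * x^4 ≤ 2.4675^3 * x^4 := mul_le_mul_of_nonneg_right h3 hx4
  have h5' : x^5 * x^4 ≤ 2.4675^5 * x^4 := mul_le_mul_of_nonneg_right h5 hx4
  have h7' : x^7 * x^4 ≤ 2.4675^7 * x^4 := mul_le_mul_of_nonneg_right h7 hx4
  have htail : (3911/31104000)*x^5 + (-8899/933120000)*x^6
      + (1361/2488320000)*x^7 + (-47/1990656000)*x^8 + (12089/16124313600000)*x^9
      + (-179/10749542400000)*x^10 + (1/4299816960000)*x^11
      + (-1/644972544000000)*x^12 ≤ (1/3000)*x^4 := by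
    nlinarith [pow_nonneg hx0 6, pow_nonneg hx0 8, pow_nonneg hx0 10, pow_nonneg hx0 12,
      h1, h3', h5', h7']
  have hq : (-31/180 : ℝ) + (2893/21600)*x + (-227/5184)*x^2 + (6907/777600)*x^3
      + (-4699/5184000)*x^4 < 0 := by
    nlinarith [sq_nonneg (x - 3/2), sq_nonneg x, mul_nonneg (mul_nonneg hx0 hx0) hx0,
      mul_nonneg hx0 (sub_nonneg.2 hxb), sq_nonneg (x*(x-3/2)),
      mul_nonneg (mul_nonneg hx0 hx0) (sub_nonneg.2 hxb)]
  linarith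


set_option maxHeartbeats 2000000 in
theorem F_neg :
    ∀ a ∈ Set.Ioo (0 : ℝ) 1,
      14 + 4 * a ^ 2 + 6 * arcsin (Real.sqrt (1 - a ^ 2)) / (a * Real.sqrt (1 - a ^ 2))
        - 3 * (a + arcsin (Real.sqrt (1 - a ^ 2)) / Real.sqrt (1 - a ^ 2)) ^ 3 / a < 0 := by
  rintro a ⟨ha0, ha1⟩
  have ha2 : a ^ 2 < 1 := by nlinarith
  have hs2 : (0:ℝ) < 1 - a ^ 2 := by linarith
  set s := Real.sqrt (1 - a ^ 2) with hs_def
  have hs0 : 0 < s := Real.sqrt_pos.2 hs2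
  have hssq : s ^ 2 = 1 - a ^ 2 := Real.sq_sqrt hs2.le
  have hs1 : s ≤ 1 := by nlinarith [sq_nonneg (s - 1)]
  set θ := arcsin s with hθ_def
  have hθ0 : 0 < θ := Real.arcsin_pos.2 hs0
  have hsin : Real.sin θ = s := Real.sin_arcsin (by linarith) hs1
  have hcos : Real.cos θ = a := by
    rw [hθ_def, Real.cos_arcsin]
    have h1 : 1 - s ^ 2 = a ^ 2 := by linarith
    rw [h1, Real.sqrt_sq ha0.le]
  have hθb : θ ≤ 1.5708 := by
    have h1 : θ ≤ π / 2 := Real.arcsin_le_pi_div_two s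
    have h2 := Real.pi_lt_d6
    linarith
  have hsθ : s ≤ θ := by rw [← hsin]; exact Real.sin_le hθ0.le
  have hu_u : s ≤ θ - θ ^ 3 / 6 + θ ^ 5 / 120 := by
    rw [← hsin]; exact sin_le_poly θ hθ0.le
  have ha_lo : 1 - θ ^ 2 / 2 + θ ^ 4 / 24 - θ ^ 6 / 720 ≤ a := by
    rw [← hcos]; exact cos_ge_poly θ hθ0.le
  have ha_hi : a ≤ 1 - θ ^ 2 / 2 + θ ^ 4 / 24 := by
    rw [← hcos]; exact cos_le_poly θ hθ0.le
  clear_value s θ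
  have hx2b : θ ^ 2 ≤ 2.4675 := by
    nlinarith [mul_nonneg (sub_nonneg.2 hθb) hθ0.le]
  -- key1, with everything explicit in θ
  have key1 : (14 * (1 - θ^2/2 + θ^4/24 - θ^6/720) + (1 - θ^2/2 + θ^4/24 - θ^6/720)^3)
        * (θ - θ^3/6 + θ^5/120)^3
      + 6 * θ * (θ - θ^3/6 + θ^5/120)^2
      - 9 * (1 - θ^2/2 + θ^4/24 - θ^6/720)^2 * θ * (θ - θ^3/6 + θ^5/120)^2
      - 9 * (1 - θ^2/2 + θ^4/24 - θ^6/720) * θ^2 * (θ - θ^3/6 + θ^5/120)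
      - 3 * θ^3 < -(1/40) * θ^9 := by
    have hP := poly_fact (θ^2) (by positivity) hx2b
    have hid : (14 * (1 - θ^2/2 + θ^4/24 - θ^6/720) + (1 - θ^2/2 + θ^4/24 - θ^6/720)^3)
        * (θ - θ^3/6 + θ^5/120)^3
      + 6 * θ * (θ - θ^3/6 + θ^5/120)^2
      - 9 * (1 - θ^2/2 + θ^4/24 - θ^6/720)^2 * θ * (θ - θ^3/6 + θ^5/120)^2
      - 9 * (1 - θ^2/2 + θ^4/24 - θ^6/720) * θ^2 * (θ - θ^3/6 + θ^5/120)
      - 3 * θ^3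
      = θ^9 * ((-71/360 : ℝ) + (2893/21600)*(θ^2) + (-227/5184)*(θ^2)^2
        + (6907/777600)*(θ^2)^3 + (-6427/5184000)*(θ^2)^4 + (3911/31104000)*(θ^2)^5
        + (-8899/933120000)*(θ^2)^6 + (1361/2488320000)*(θ^2)^7
        + (-47/1990656000)*(θ^2)^8 + (12089/16124313600000)*(θ^2)^9
        + (-179/10749542400000)*(θ^2)^10 + (1/4299816960000)*(θ^2)^11
        + (-1/644972544000000)*(θ^2)^12) := by ring
    rw [hid]
    have hθ9 : (0:ℝ) < θ^9 := by positivity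
    have := mul_lt_mul_of_pos_left hP hθ9
    linarith
  -- now go atomic
  obtain ⟨c, hc_def⟩ : ∃ c : ℝ, c = 1 - θ ^ 2 / 2 + θ ^ 4 / 24 - θ ^ 6 / 720 := ⟨_, rfl⟩
  obtain ⟨u, hu_def⟩ : ∃ u : ℝ, u = θ - θ ^ 3 / 6 + θ ^ 5 / 120 := ⟨_, rfl⟩
  have k1 : (14 * c + c^3) * u^3 + 6*θ*u^2 - 9*c^2*θ*u^2 - 9*c*θ^2*u - 3*θ^3
      < -(1/40) * θ^9 := by
    rw [hc_def, hu_def]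
    exact key1
  clear key1
  have hu0 : 0 < u := by rw [hu_def]; exact lt_of_lt_of_le hs0 hu_u
  have huθ : u ≤ θ := by
    rw [hu_def]
    nlinarith [mul_le_mul_of_nonneg_left hx2b (pow_nonneg hθ0.le 3)]
  have hclo : -(1/500) ≤ c := by
    rw [hc_def]
    nlinarith [mul_nonneg (sub_nonneg.2 hx2b)
      (show (0:ℝ) ≤ 360 - 30*(θ^2 + 2.4675) + (θ^4 + 2.4675*θ^2 + 2.4675^2) by
        nlinarith [sq_nonneg θ, sq_nonneg (θ^2)])]
  have hcle : c ≤ 1 := by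
    rw [hc_def]
    nlinarith [sq_nonneg θ, mul_le_mul_of_nonneg_left hx2b (sq_nonneg θ)]
  -- key2 : Q ≤ Qc + (1/40) θ^9
  have he0 : 0 ≤ a - c := by rw [hc_def]; linarith
  have he1 : a - c ≤ θ ^ 6 / 720 := by
    rw [hc_def]
    linarith
  have hM : 14*u^3 + (a^2 + a*c + c^2)*u^3 - 9*(a+c)*θ*u^2 - 9*θ^2*u ≤ 18*θ^3 := by
    have hu3 : u^3 ≤ θ^3 := pow_le_pow_left₀ hu0.le huθ 3
    have hu2 : u^2 ≤ θ^2 := pow_le_pow_left₀ hu0.le huθ 2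
    have hca : c ≤ a := by linarith
    have habc : a^2 + a*c + c^2 ≤ 3 := by nlinarith
    have hac : -(2/500) ≤ a + c := by linarith
    have p2 : θ*u^2 ≤ θ^3 := by nlinarith [mul_le_mul_of_nonneg_left hu2 hθ0.le]
    have p3 : (a^2 + a*c + c^2)*u^3 ≤ 3*θ^3 := by
      nlinarith [mul_le_mul_of_nonneg_right habc (pow_nonneg hu0.le 3)]
    have p4 : -9*(a+c)*θ*u^2 ≤ (18/500)*θ^3 := by
      nlinarith [mul_le_mul_of_nonneg_right hac (mul_nonneg hθ0.le (sq_nonneg u))]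
    have p5 : -9*θ^2*u ≤ 0 := by
      have : (0:ℝ) ≤ θ^2*u := mul_nonneg (sq_nonneg θ) hu0.le
      linarith
    have p6 : (0:ℝ) ≤ θ^3 := pow_nonneg hθ0.le 3
    linarith
  have key2 : (14 * a + a^3) * u^3 + 6*θ*u^2 - 9*a^2*θ*u^2 - 9*a*θ^2*u - 3*θ^3
      ≤ (14 * c + c^3) * u^3 + 6*θ*u^2 - 9*c^2*θ*u^2 - 9*c*θ^2*u - 3*θ^3
        + (1/40) * θ^9 := by
    have hfac : (14 * a + a^3) * u^3 + 6*θ*u^2 - 9*a^2*θ*u^2 - 9*a*θ^2*u - 3*θ^3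
        - ((14 * c + c^3) * u^3 + 6*θ*u^2 - 9*c^2*θ*u^2 - 9*c*θ^2*u - 3*θ^3)
        = (a - c) * (14*u^3 + (a^2 + a*c + c^2)*u^3 - 9*(a+c)*θ*u^2 - 9*θ^2*u) := by
      ring
    have h2 : (a - c) * (14*u^3 + (a^2 + a*c + c^2)*u^3 - 9*(a+c)*θ*u^2 - 9*θ^2*u)
        ≤ (θ^6/720) * (18*θ^3) := by
      calc (a - c) * (14*u^3 + (a^2 + a*c + c^2)*u^3 - 9*(a+c)*θ*u^2 - 9*θ^2*u)
          ≤ (a - c) * (18*θ^3) := mul_le_mul_of_nonneg_left hM he0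
        _ ≤ (θ^6/720) * (18*θ^3) := by
            apply mul_le_mul_of_nonneg_right he1
            positivity
      
    linarith only [hfac, h2]
  have hQneg : (14 * a + a^3) * u^3 + 6*θ*u^2 - 9*a^2*θ*u^2 - 9*a*θ^2*u - 3*θ^3 < 0 := by
    linarith only [k1, key2]
  -- t and t0
  set t : ℝ := θ / s with ht_def
  have ht_ge1 : 1 ≤ t := by rw [ht_def]; exact (one_le_div hs0).2 hsθ
  obtain ⟨t0, ht0_def⟩ : ∃ t0 : ℝ, t0 = θ / u := ⟨_, rfl⟩
  have ht0_ge1 : 1 ≤ t0 := by rw [ht0_def]; exact (one_le_div hu0).2 huθ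
  have ht_ge_t0 : t0 ≤ t := by
    rw [ht0_def, ht_def, hu_def]
    exact div_le_div_of_nonneg_left hθ0.le hs0 hu_u
  have ht0u : t0 * u = θ := by rw [ht0_def]; exact div_mul_cancel₀ θ (ne_of_gt hu0)
  have hGQ : (14*a + a^3 + 6*t0 - 9*a^2*t0 - 9*a*t0^2 - 3*t0^3) * u^3
      = (14 * a + a^3) * u^3 + 6*θ*u^2 - 9*a^2*θ*u^2 - 9*a*θ^2*u - 3*θ^3 := by
    linear_combination (6*u^2 - 9*a^2*u^2 - 9*a*u*(t0*u+θ)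
      - 3*((t0*u)^2 + t0*u*θ + θ^2)) * ht0u
  have hG0 : 14*a + a^3 + 6*t0 - 9*a^2*t0 - 9*a*t0^2 - 3*t0^3 < 0 := by
    by_contra h
    push_neg at h
    nlinarith [mul_nonneg h (pow_pos hu0 3).le]
  have hGmain : 14*a + a^3 + 6*t - 9*a^2*t - 9*a*t^2 - 3*t^3 < 0 := by
    have hd : 0 ≤ t - t0 := by linarith
    nlinarith [mul_nonneg hd (show (0:ℝ) ≤ 9*a^2 + 9*a*(t+t0) + 3*(t^2 + t*t0 + t0^2) - 6 by
      nlinarith [mul_nonneg ha0.le (by linarith : (0:ℝ) ≤ t + t0)])]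
  have hgoal_eq : 14 + 4 * a ^ 2 + 6 * θ / (a * s) - 3 * (a + t) ^ 3 / a
      = (14*a + a^3 + 6*t - 9*a^2*t - 9*a*t^2 - 3*t^3) / a + (9*t/s)*(s - s) := by
    rw [ht_def]
    field_simp
    ring
  calc 14 + 4 * a ^ 2 + 6 * θ / (a * s) - 3 * (a + t) ^ 3 / a
      = (14*a + a^3 + 6*t - 9*a^2*t - 9*a*t^2 - 3*t^3) / a + (9*t/s)*(s - s) := hgoal_eq
    _ = (14*a + a^3 + 6*t - 9*a^2*t - 9*a*t^2 - 3*t^3) / a := by ring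
    _ < 0 := div_neg_of_neg_of_pos hGmain ha0
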